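/- Let S be a packing sequence with s_1 = 1, s_2 ∈ {2,3}, and s_3, s_4 ∈ {4,5,6,7} (so S ∈ S(4)). Then for every n ≥ 3, the cycle C_n is χ_S-vertex-critical if and only if n ∈ {4, 8} or C_n is χ_S-critical. -/

import Mathlib

open SimpleGraph
open scoped Fin.NatCast Fin.CommRing

/-- `IsSPackingColoring G s φ` : `φ` is an `S`-packing coloring of `G` with colors
`Fin k`, where the value `s i` represents the entry `s_{i+1}` of the packing
sequence `S = (s_1, s_2, …)` (0-indexed encoding), and the color `j : Fin k`
represents color `j+1`: two distinct vertices sharing a color `i` (1-indexed)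
must be at distance greater than `s_i`. -/
def IsSPackingColoring {V : Type*} (G : SimpleGraph V) (s : ℕ → ℕ) {k : ℕ}
    (φ : V → Fin k) : Prop :=
  ∀ u v : V, u ≠ v → φ u = φ v → (s (φ u) : ℕ∞) < G.edist u v

/-- The `S`-packing chromatic number of `G`: the least `k` admitting an
`S`-packing `k`-coloring. -/
noncomputable def SPackingChromatic {V : Type*} (G : SimpleGraph V) (s : ℕ → ℕ) : ℕ :=
  sInf {k | ∃ φ : V → Fin k, IsSPackingColoring G s φ}

/-- `G` is `χ_S`-critical: every proper subgraph has a strictly smaller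
`S`-packing chromatic number. -/
def SCritical {V : Type*} (G : SimpleGraph V) (s : ℕ → ℕ) : Prop :=
  ∀ H : G.Subgraph, H ≠ ⊤ → SPackingChromatic H.coe s < SPackingChromatic G s

/-- `G` is `χ_S`-vertex-critical: deleting any vertex strictly decreases the
`S`-packing chromatic number. -/
def SVertexCritical {V : Type*} (G : SimpleGraph V) (s : ℕ → ℕ) : Prop :=
  ∀ v : V, SPackingChromatic (G.induce {u | u ≠ v}) s < SPackingChromatic G s

/-! ### Auxiliary lemmas -/

section Core
variable {V W : Type*}

lemma SP.hom_edist_le {G : SimpleGraph V} {G' : SimpleGraph W} (f : G →g G') (u v : V) :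
    G'.edist (f u) (f v) ≤ G.edist u v := by
  refine le_iInf fun p => ?_
  calc G'.edist (f u) (f v) ≤ ((p.map f).length : ℕ∞) := edist_le _
  _ = (p.length : ℕ∞) := by rw [SimpleGraph.Walk.length_map]

lemma SP.chrom_le {G : SimpleGraph V} {s : ℕ → ℕ} {k : ℕ} (φ : V → Fin k)
    (h : IsSPackingColoring G s φ) : SPackingChromatic G s ≤ k :=
  Nat.sInf_le ⟨φ, h⟩

lemma SP.coloring_castLE {G : SimpleGraph V} {s : ℕ → ℕ} {k l : ℕ} (hkl : k ≤ l)
    (φ : V → Fin k) (h : IsSPackingColoring G s φ) :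
    IsSPackingColoring G s (fun v => Fin.castLE hkl (φ v)) := by
  intro u v huv heq
  simpa using h u v huv (by simpa [Fin.ext_iff] using heq)

lemma SP.exists_coloring [Finite V] (G : SimpleGraph V) (s : ℕ → ℕ) :
    {k | ∃ φ : V → Fin k, IsSPackingColoring G s φ}.Nonempty := by
  obtain ⟨k, ⟨f⟩⟩ := Finite.exists_equiv_fin V
  exact ⟨k, f, fun u v huv heq => absurd (f.injective heq) huv⟩

lemma SP.lt_chrom [Finite V] {G : SimpleGraph V} {s : ℕ → ℕ} {k : ℕ}
    (h : ∀ φ : V → Fin k, ¬ IsSPackingColoring G s φ) : k < SPackingChromatic G s := by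
  by_contra hlt
  push_neg at hlt
  obtain ⟨ψ, hψ⟩ := Nat.sInf_mem (SP.exists_coloring G s)
  exact h (fun v => Fin.castLE hlt (ψ v)) (SP.coloring_castLE hlt ψ hψ)

lemma SP.chrom_mono {G : SimpleGraph V} {G' : SimpleGraph W} [Finite W] {s : ℕ → ℕ}
    (f : G →g G') (hf : Function.Injective f) :
    SPackingChromatic G s ≤ SPackingChromatic G' s := by
  obtain ⟨ψ, hψ⟩ := Nat.sInf_mem (SP.exists_coloring G' s)
  refine SP.chrom_le (fun v => ψ (f v)) ?_
  intro u v huv heq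
  exact lt_of_lt_of_le (hψ (f u) (f v) (fun h => huv (hf h)) heq) (SP.hom_edist_le f u v)

end Core

section Dist

lemma SP.path_edist_le {m : ℕ} (u v : Fin m) (h : u.val ≤ v.val) :
    (pathGraph m).edist u v ≤ (v.val - u.val : ℕ) := by
  obtain ⟨d, hd⟩ := Nat.exists_eq_add_of_le h
  have key : ∀ d : ℕ, ∀ u v : Fin m, u.val + d = v.val →
      (pathGraph m).edist u v ≤ (d : ℕ∞) := by
    intro d
    induction d with
    | zero => intro u v huv; have : u = v := Fin.ext (by omega); simp [this]
    | succ d ih =>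
      intro u v huv
      have hw : u.val + d < m := by omega
      set w : Fin m := ⟨u.val + d, hw⟩ with hwdef
      have h1 : (pathGraph m).edist u w ≤ (d : ℕ∞) := ih u w rfl
      have hadj : (pathGraph m).Adj w v := by
        rw [pathGraph_adj]; left; simp [hwdef]; omega
      have h2 : (pathGraph m).edist w v = 1 := edist_eq_one_iff_adj.mpr hadj
      calc (pathGraph m).edist u v ≤ _ + _ := SimpleGraph.edist_triangle (v := w)
        _ ≤ (d : ℕ∞) + 1 := by rw [h2]; exact add_le_add_left h1 1
        _ = ((d+1 : ℕ) : ℕ∞) := by push_cast; ring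
  have := key d u v (by omega)
  have hc : (v.val - u.val : ℕ) = d := by omega
  rw [hc]; exact this

lemma SP.path_edist_le' {m : ℕ} (u v : Fin m) :
    (pathGraph m).edist u v ≤ ((max u.val v.val - min u.val v.val : ℕ) : ℕ∞) := by
  rcases le_total u.val v.val with h | h
  · have := SP.path_edist_le u v h
    have hc : max u.val v.val - min u.val v.val = v.val - u.val := by omega
    rw [hc]; exact this
  · have := SP.path_edist_le v u h
    have hc : max u.val v.val - min u.val v.val = u.val - v.val := by omega
    rw [hc, SimpleGraph.edist_comm]; exact this

lemma SP.path_walk_ge {m : ℕ} {u v : Fin m} (p : (pathGraph m).Walk u v) :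
    (max u.val v.val - min u.val v.val : ℕ) ≤ p.length := by
  induction p with
  | nil => simp
  | cons hadj q ih =>
    rw [pathGraph_adj] at hadj
    rw [SimpleGraph.Walk.length_cons]
    omega

lemma SP.path_edist_ge {m : ℕ} (u v : Fin m) :
    ((max u.val v.val - min u.val v.val : ℕ) : ℕ∞) ≤ (pathGraph m).edist u v := by
  refine le_iInf fun p => ?_
  exact_mod_cast SP.path_walk_ge p

variable {n : ℕ}

lemma SP.fin_val_one (hn : 2 ≤ n) [NeZero n] : (1 : Fin n).val = 1 := by
  rcases n with _|_|n
  · omega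
  · omega
  · exact Fin.val_one _

lemma SP.cycle_adj_succ (hn : 2 ≤ n) [NeZero n] (x : Fin n) :
    (cycleGraph n).Adj x (x + 1) := by
  rw [cycleGraph_adj']
  right
  have : x + 1 - x = 1 := by ring
  rw [this, SP.fin_val_one hn]

lemma SP.cycle_edist_le_nat (hn : 2 ≤ n) [NeZero n] (u : Fin n) (d : ℕ) :
    (cycleGraph n).edist u (u + (d : Fin n)) ≤ (d : ℕ∞) := by
  induction d with
  | zero => simp
  | succ d ih =>
    have hs : ((d+1 : ℕ) : Fin n) = ((d : ℕ) : Fin n) + 1 := by push_cast; ring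
    have hadj : (cycleGraph n).Adj (u + (d : Fin n)) (u + ((d+1:ℕ) : Fin n)) := by
      rw [hs, ← add_assoc]; exact SP.cycle_adj_succ hn _
    calc (cycleGraph n).edist u (u + ((d+1:ℕ) : Fin n)) ≤ _ + _ :=
          SimpleGraph.edist_triangle (v := u + (d : Fin n))
      _ ≤ (d : ℕ∞) + 1 := by
          rw [edist_eq_one_iff_adj.mpr hadj]
          exact add_le_add_left ih 1
      _ = ((d+1 : ℕ) : ℕ∞) := by push_cast; ring

lemma SP.cycle_edist_le (hn : 2 ≤ n) [NeZero n] (u v : Fin n) :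
    (cycleGraph n).edist u v ≤ (min (v - u).val (u - v).val : ℕ) := by
  have h1 : (cycleGraph n).edist u v ≤ ((v - u).val : ℕ∞) := by
    have := SP.cycle_edist_le_nat hn u (v - u).val
    rwa [Fin.cast_val_eq_self, add_sub_cancel] at this
  have h2 : (cycleGraph n).edist u v ≤ ((u - v).val : ℕ∞) := by
    have := SP.cycle_edist_le_nat hn v (u - v).val
    rw [Fin.cast_val_eq_self, add_sub_cancel] at this
    rwa [SimpleGraph.edist_comm] at this
  rcases min_cases (v - u).val (u - v).val with ⟨h, _⟩ | ⟨h, _⟩ <;> rw [h]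
  · exact h1
  · exact h2

lemma SP.cycle_walk_diff [NeZero n] {u v : Fin n} (w : (cycleGraph n).Walk u v) :
    ∃ p q : ℕ, p + q ≤ w.length ∧ v - u = (p : Fin n) - (q : Fin n) := by
  induction w with
  | nil => exact ⟨0, 0, by simp, by simp⟩
  | @cons a b c hadj w ih =>
    obtain ⟨p, q, hle, heq⟩ := ih
    rw [cycleGraph_adj'] at hadj
    rw [SimpleGraph.Walk.length_cons]
    rcases hadj with h | h
    · have hab : a - b = ((1:ℕ) : Fin n) := by
        rw [← Fin.cast_val_eq_self (a - b), h]
      refine ⟨p, q + 1, by omega, ?_⟩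
      have hc : c - a = (c - b) - (a - b) := by ring
      rw [hc, heq, hab]
      push_cast
      ring
    · have hab : b - a = ((1:ℕ) : Fin n) := by
        rw [← Fin.cast_val_eq_self (b - a), h]
      refine ⟨p + 1, q, by omega, ?_⟩
      have hc : c - a = (c - b) + (b - a) := by ring
      rw [hc, heq, hab]
      push_cast
      ring

lemma SP.cycle_edist_ge [NeZero n] {u v : Fin n} {d : ℕ}
    (h : ∀ p q : ℕ, v - u = (p : Fin n) - (q : Fin n) → d ≤ p + q) :
    (d : ℕ∞) ≤ (cycleGraph n).edist u v := by
  refine le_iInf fun w => ?_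
  obtain ⟨p, q, hle, heq⟩ := SP.cycle_walk_diff w
  exact_mod_cast le_trans (h p q heq) hle

lemma SP.one_lt_edist {V : Type*} {G : SimpleGraph V} {u v : V} (hne : u ≠ v)
    (hnadj : ¬ G.Adj u v) : 1 < G.edist u v := by
  have h0 : G.edist u v ≠ 0 := by simp [hne]
  have h1 : G.edist u v ≠ 1 := fun h => hnadj (edist_eq_one_iff_adj.mp h)
  have h2 : 1 ≤ G.edist u v := Order.one_le_iff_pos.mpr (pos_iff_ne_zero.mpr h0)
  exact lt_of_le_of_ne h2 (Ne.symm h1)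

end Dist

/-! ### Upper bounds for paths -/

section Colorings
variable {s : ℕ → ℕ}

def SP.col2 (a : ℕ) : ℕ := if a % 2 = 0 then 0 else 1
def SP.col3 (a : ℕ) : ℕ := if a % 2 = 0 then 0 else if a % 4 = 1 then 1 else 2
def SP.col4 (a : ℕ) : ℕ :=
  if a % 2 = 0 then 0 else if a % 4 = 1 then 1 else if a % 8 = 3 then 2 else 3

lemma SP.k2 : ∀ a b, a < b → b < 3 → SP.col2 a = SP.col2 b → SP.col2 a = 0 ∧ 2 ≤ b - a := by
  intro a b hab hb h; unfold SP.col2 at *; split_ifs at h ⊢ <;> omega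

lemma SP.k3 : ∀ a b, a < b → b < 7 → SP.col3 a = SP.col3 b →
    (SP.col3 a = 0 ∧ 2 ≤ b - a) ∨ (SP.col3 a = 1 ∧ 4 ≤ b - a) := by
  intro a b hab hb h; unfold SP.col3 at *; split_ifs at h ⊢ <;> omega

lemma SP.k4 : ∀ a b, a < b → SP.col4 a = SP.col4 b →
    (SP.col4 a = 0 ∧ 2 ≤ b - a) ∨ (SP.col4 a = 1 ∧ 4 ≤ b - a) ∨
    (2 ≤ SP.col4 a ∧ SP.col4 a ≤ 3 ∧ 8 ≤ b - a) := by
  intro a b hab h; unfold SP.col4 at *; split_ifs at h ⊢ <;> omega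

lemma SP.isCol_path {m k : ℕ} (f : ℕ → ℕ) (hf : ∀ a, f a < k)
    (key : ∀ a b, a < b → b < m → f a = f b → s (f a) < b - a) :
    IsSPackingColoring (pathGraph m) s (fun i => (⟨f i.val, hf _⟩ : Fin k)) := by
  intro u v hne heq
  simp only [Fin.mk.injEq] at heq
  show (s (f u.val) : ℕ∞) < _
  rcases lt_trichotomy u.val v.val with h | h | h
  · have hk := key u.val v.val h v.isLt heq
    refine lt_of_lt_of_le ?_ (SP.path_edist_ge u v)
    have hmm : max u.val v.val - min u.val v.val = v.val - u.val := by omega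
    rw [hmm]
    exact_mod_cast hk
  · exact absurd (Fin.ext h) hne
  · have hk := key v.val u.val h u.isLt heq.symm
    rw [← heq] at hk
    refine lt_of_lt_of_le ?_ (SP.path_edist_ge u v)
    have hmm : max u.val v.val - min u.val v.val = u.val - v.val := by omega
    rw [hmm]
    exact_mod_cast hk

variable (h1 : s 0 = 1) (h2 : s 1 = 2 ∨ s 1 = 3) (h3 : 4 ≤ s 2 ∧ s 2 ≤ 7)
  (h4 : 4 ≤ s 3 ∧ s 3 ≤ 7)

include h1 in
lemma SP.path_le_two {m : ℕ} (hm : m ≤ 3) : SPackingChromatic (pathGraph m) s ≤ 2 := by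
  have hf : ∀ a, SP.col2 a < 2 := by intro a; unfold SP.col2; split_ifs <;> omega
  refine SP.chrom_le _ (SP.isCol_path (m := m) SP.col2 hf ?_)
  intro a b hab hb h
  obtain ⟨hc, hd⟩ := SP.k2 a b hab (by omega) h
  rw [hc, h1]; omega

include h1 h2 in
lemma SP.path_le_three {m : ℕ} (hm : m ≤ 7) : SPackingChromatic (pathGraph m) s ≤ 3 := by
  have hf : ∀ a, SP.col3 a < 3 := by intro a; unfold SP.col3; split_ifs <;> omega
  refine SP.chrom_le _ (SP.isCol_path (m := m) SP.col3 hf ?_)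
  intro a b hab hb h
  rcases SP.k3 a b hab (by omega) h with ⟨hc, hd⟩ | ⟨hc, hd⟩
  · rw [hc, h1]; omega
  · rw [hc]; rcases h2 with h2 | h2 <;> omega

include h1 h2 h3 h4 in
lemma SP.path_le_four {m : ℕ} : SPackingChromatic (pathGraph m) s ≤ 4 := by
  have hf : ∀ a, SP.col4 a < 4 := by intro a; unfold SP.col4; split_ifs <;> omega
  refine SP.chrom_le _ (SP.isCol_path (m := m) SP.col4 hf ?_)
  intro a b hab hb h
  rcases SP.k4 a b hab h with ⟨hc, hd⟩ | ⟨hc, hd⟩ | ⟨hc, hc', hd⟩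
  · rw [hc, h1]; omega
  · rw [hc]; rcases h2 with h2 | h2 <;> omega
  · have hcc : SP.col4 a = 2 ∨ SP.col4 a = 3 := by omega
    rcases hcc with hcc | hcc <;> rw [hcc] <;> omega

lemma SP.path_mono {k m : ℕ} (hkm : k ≤ m) :
    SPackingChromatic (pathGraph k) (s := s) ≤ SPackingChromatic (pathGraph m) s := by
  refine SP.chrom_mono (G' := pathGraph m)
    ⟨fun i => ⟨i.val, lt_of_lt_of_le i.isLt hkm⟩, ?_⟩ ?_
  · intro a b hab
    rw [pathGraph_adj] at hab ⊢
    exact hab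
  · intro a b hab
    rw [Fin.ext_iff]
    simpa [Fin.ext_iff] using hab

end Colorings

/-! ### Lower bounds via finite checks -/

section LowerBounds
variable {s : ℕ → ℕ}

def SP.gapP {N : ℕ} (d : ℕ) (S : Finset (Fin N)) : Prop :=
  ∀ x ∈ S, ∀ y ∈ S, x ≠ y → d ≤ max x.val y.val - min x.val y.val

instance {N d : ℕ} {S : Finset (Fin N)} : Decidable (SP.gapP d S) := by
  unfold SP.gapP; infer_instance

def SP.cgapP {N : ℕ} (d : ℕ) (S : Finset (Fin N)) : Prop :=
  ∀ x ∈ S, ∀ y ∈ S, x ≠ y → d ≤ min (y - x).val (x - y).val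

instance {N d : ℕ} {S : Finset (Fin N)} : Decidable (SP.cgapP d S) := by
  unfold SP.cgapP; infer_instance

lemma SP.dec_p4 : ∀ B : Finset (Fin 4), SP.gapP 3 B →
    ¬ SP.gapP 2 (Finset.univ \ B) := by decide

lemma SP.dec_c4 : ∀ B : Finset (Fin 4), SP.cgapP 3 B →
    ¬ SP.cgapP 2 (Finset.univ \ B) := by decide

set_option maxRecDepth 10000 in
set_option maxHeartbeats 1000000 in
lemma SP.dec_p8 : ∀ B C : Finset (Fin 8), SP.gapP 3 B → SP.gapP 5 C → Disjoint B C →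
    ¬ SP.gapP 2 ((Finset.univ \ B) \ C) := by decide

set_option maxRecDepth 10000 in
set_option maxHeartbeats 1000000 in
lemma SP.dec_c8 : ∀ B C : Finset (Fin 8), SP.cgapP 3 B → SP.cgapP 5 C → Disjoint B C →
    ¬ SP.cgapP 2 ((Finset.univ \ B) \ C) := by decide

lemma SP.pack_lt_nat {A B : ℕ} {e : ℕ∞} (hlt : (A : ℕ∞) < e) (hle : e ≤ (B : ℕ)) : A < B := by
  exact_mod_cast lt_of_lt_of_le hlt hle

lemma SP.lb_P2 (hpos : ∀ i, 1 ≤ s i) : 1 < SPackingChromatic (pathGraph 2) s := by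
  refine SP.lt_chrom fun φ hφ => ?_
  have heq : φ 0 = φ 1 := Subsingleton.elim _ _
  have hlt := hφ 0 1 (by decide) heq
  have := SP.pack_lt_nat hlt (SP.path_edist_le' 0 1)
  have hb : max (0 : Fin 2).val (1 : Fin 2).val - min (0 : Fin 2).val (1 : Fin 2).val = 1 := rfl
  rw [hb] at this
  have := hpos (φ 0).val
  omega

lemma SP.lb_P4 (h1 : s 0 = 1) (h2 : s 1 = 2 ∨ s 1 = 3) :
    2 < SPackingChromatic (pathGraph 4) s := by
  refine SP.lt_chrom fun φ hφ => ?_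
  have key : ∀ x y : Fin 4, x ≠ y → φ x = φ y →
      s (φ x).val < max x.val y.val - min x.val y.val :=
    fun x y hne heq => SP.pack_lt_nat (hφ x y hne heq) (SP.path_edist_le' x y)
  set B := Finset.univ.filter (fun x => φ x = 1) with hB
  refine SP.dec_p4 B ?_ ?_
  · intro x hx y hy hne
    have hx1 : φ x = 1 := (Finset.mem_filter.mp hx).2
    have hy1 : φ y = 1 := (Finset.mem_filter.mp hy).2
    have hk := key x y hne (hx1.trans hy1.symm)
    rw [hx1] at hk
    simp only [Fin.val_one] at hk
    rcases h2 with h2 | h2 <;> omega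
  · intro x hx y hy hne
    rw [Finset.mem_sdiff] at hx hy
    have hx0 : φ x = 0 := by
      have hne1 : ¬ (φ x = 1) := fun hh => hx.2 (Finset.mem_filter.mpr ⟨Finset.mem_univ _, hh⟩)
      have := (φ x).isLt
      rw [Fin.ext_iff] at hne1 ⊢
      simp only [Fin.val_one, Fin.val_zero] at *
      omega
    have hy0 : φ y = 0 := by
      have hne1 : ¬ (φ y = 1) := fun hh => hy.2 (Finset.mem_filter.mpr ⟨Finset.mem_univ _, hh⟩)
      have := (φ y).isLt
      rw [Fin.ext_iff] at hne1 ⊢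
      simp only [Fin.val_one, Fin.val_zero] at *
      omega
    have hk := key x y hne (hx0.trans hy0.symm)
    rw [hx0] at hk
    simp only [Fin.val_zero] at hk
    omega

lemma SP.lb_P8 (h1 : s 0 = 1) (h2 : s 1 = 2 ∨ s 1 = 3) (h3 : 4 ≤ s 2 ∧ s 2 ≤ 7) :
    3 < SPackingChromatic (pathGraph 8) s := by
  refine SP.lt_chrom fun φ hφ => ?_
  have key : ∀ x y : Fin 8, x ≠ y → φ x = φ y →
      s (φ x).val < max x.val y.val - min x.val y.val :=
    fun x y hne heq => SP.pack_lt_nat (hφ x y hne heq) (SP.path_edist_le' x y)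
  set B := Finset.univ.filter (fun x => φ x = 1) with hB
  set C := Finset.univ.filter (fun x => φ x = 2) with hC
  refine SP.dec_p8 B C ?_ ?_ ?_ ?_
  · intro x hx y hy hne
    have hx1 : φ x = 1 := (Finset.mem_filter.mp hx).2
    have hy1 : φ y = 1 := (Finset.mem_filter.mp hy).2
    have hk := key x y hne (hx1.trans hy1.symm)
    rw [hx1] at hk
    simp only [Fin.val_one] at hk
    rcases h2 with h2 | h2 <;> omega
  · intro x hx y hy hne
    have hx1 : φ x = 2 := (Finset.mem_filter.mp hx).2
    have hy1 : φ y = 2 := (Finset.mem_filter.mp hy).2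
    have hk := key x y hne (hx1.trans hy1.symm)
    rw [hx1] at hk
    have hv2 : ((2 : Fin 3)).val = 2 := rfl
    rw [hv2] at hk
    omega
  · rw [Finset.disjoint_left]
    intro x hx hx'
    have hx1 : φ x = 1 := (Finset.mem_filter.mp hx).2
    have hx2 : φ x = 2 := (Finset.mem_filter.mp hx').2
    rw [hx1] at hx2
    exact absurd hx2 (by decide)
  · intro x hx y hy hne
    rw [Finset.mem_sdiff] at hx hy
    obtain ⟨hx', hxC⟩ := hx
    rw [Finset.mem_sdiff] at hx'
    obtain ⟨hy', hyC⟩ := hy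
    rw [Finset.mem_sdiff] at hy'
    have hx0 : φ x = 0 := by
      have hn1 : ¬ (φ x = 1) := fun hh => hx'.2 (Finset.mem_filter.mpr ⟨Finset.mem_univ _, hh⟩)
      have hn2 : ¬ (φ x = 2) := fun hh => hxC (Finset.mem_filter.mpr ⟨Finset.mem_univ _, hh⟩)
      have := (φ x).isLt
      rw [Fin.ext_iff] at hn1 hn2 ⊢
      simp only [Fin.val_one, Fin.val_zero] at *
      omega
    have hy0 : φ y = 0 := by
      have hn1 : ¬ (φ y = 1) := fun hh => hy'.2 (Finset.mem_filter.mpr ⟨Finset.mem_univ _, hh⟩)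
      have hn2 : ¬ (φ y = 2) := fun hh => hyC (Finset.mem_filter.mpr ⟨Finset.mem_univ _, hh⟩)
      have := (φ y).isLt
      rw [Fin.ext_iff] at hn1 hn2 ⊢
      simp only [Fin.val_one, Fin.val_zero] at *
      omega
    have hk := key x y hne (hx0.trans hy0.symm)
    rw [hx0] at hk
    simp only [Fin.val_zero] at hk
    omega

lemma SP.lb_C4 (h1 : s 0 = 1) (h2 : s 1 = 2 ∨ s 1 = 3) :
    2 < SPackingChromatic (cycleGraph 4) s := by
  refine SP.lt_chrom fun φ hφ => ?_
  have key : ∀ x y : Fin 4, x ≠ y → φ x = φ y →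
      s (φ x).val < min (y - x).val (x - y).val :=
    fun x y hne heq => SP.pack_lt_nat (hφ x y hne heq)
      (SP.cycle_edist_le (by norm_num) x y)
  set B := Finset.univ.filter (fun x => φ x = 1) with hB
  refine SP.dec_c4 B ?_ ?_
  · intro x hx y hy hne
    have hx1 : φ x = 1 := (Finset.mem_filter.mp hx).2
    have hy1 : φ y = 1 := (Finset.mem_filter.mp hy).2
    have hk := key x y hne (hx1.trans hy1.symm)
    rw [hx1] at hk
    simp only [Fin.val_one] at hk
    rcases h2 with h2 | h2 <;> omega
  · intro x hx y hy hne
    rw [Finset.mem_sdiff] at hx hy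
    have hx0 : φ x = 0 := by
      have hne1 : ¬ (φ x = 1) := fun hh => hx.2 (Finset.mem_filter.mpr ⟨Finset.mem_univ _, hh⟩)
      have := (φ x).isLt
      rw [Fin.ext_iff] at hne1 ⊢
      simp only [Fin.val_one, Fin.val_zero] at *
      omega
    have hy0 : φ y = 0 := by
      have hne1 : ¬ (φ y = 1) := fun hh => hy.2 (Finset.mem_filter.mpr ⟨Finset.mem_univ _, hh⟩)
      have := (φ y).isLt
      rw [Fin.ext_iff] at hne1 ⊢
      simp only [Fin.val_one, Fin.val_zero] at *
      omega
    have hk := key x y hne (hx0.trans hy0.symm)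
    rw [hx0] at hk
    simp only [Fin.val_zero] at hk
    omega

lemma SP.lb_C8 (h1 : s 0 = 1) (h2 : s 1 = 2 ∨ s 1 = 3) (h3 : 4 ≤ s 2 ∧ s 2 ≤ 7) :
    3 < SPackingChromatic (cycleGraph 8) s := by
  refine SP.lt_chrom fun φ hφ => ?_
  have key : ∀ x y : Fin 8, x ≠ y → φ x = φ y →
      s (φ x).val < min (y - x).val (x - y).val :=
    fun x y hne heq => SP.pack_lt_nat (hφ x y hne heq)
      (SP.cycle_edist_le (by norm_num) x y)
  set B := Finset.univ.filter (fun x => φ x = 1) with hB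
  set C := Finset.univ.filter (fun x => φ x = 2) with hC
  refine SP.dec_c8 B C ?_ ?_ ?_ ?_
  · intro x hx y hy hne
    have hx1 : φ x = 1 := (Finset.mem_filter.mp hx).2
    have hy1 : φ y = 1 := (Finset.mem_filter.mp hy).2
    have hk := key x y hne (hx1.trans hy1.symm)
    rw [hx1] at hk
    simp only [Fin.val_one] at hk
    rcases h2 with h2 | h2 <;> omega
  · intro x hx y hy hne
    have hx1 : φ x = 2 := (Finset.mem_filter.mp hx).2
    have hy1 : φ y = 2 := (Finset.mem_filter.mp hy).2
    have hk := key x y hne (hx1.trans hy1.symm)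
    rw [hx1] at hk
    have hv2 : ((2 : Fin 3)).val = 2 := rfl
    rw [hv2] at hk
    omega
  · rw [Finset.disjoint_left]
    intro x hx hx'
    have hx1 : φ x = 1 := (Finset.mem_filter.mp hx).2
    have hx2 : φ x = 2 := (Finset.mem_filter.mp hx').2
    rw [hx1] at hx2
    exact absurd hx2 (by decide)
  · intro x hx y hy hne
    rw [Finset.mem_sdiff] at hx hy
    obtain ⟨hx', hxC⟩ := hx
    rw [Finset.mem_sdiff] at hx'
    obtain ⟨hy', hyC⟩ := hy
    rw [Finset.mem_sdiff] at hy'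
    have hx0 : φ x = 0 := by
      have hn1 : ¬ (φ x = 1) := fun hh => hx'.2 (Finset.mem_filter.mpr ⟨Finset.mem_univ _, hh⟩)
      have hn2 : ¬ (φ x = 2) := fun hh => hxC (Finset.mem_filter.mpr ⟨Finset.mem_univ _, hh⟩)
      have := (φ x).isLt
      rw [Fin.ext_iff] at hn1 hn2 ⊢
      simp only [Fin.val_one, Fin.val_zero] at *
      omega
    have hy0 : φ y = 0 := by
      have hn1 : ¬ (φ y = 1) := fun hh => hy'.2 (Finset.mem_filter.mpr ⟨Finset.mem_univ _, hh⟩)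
      have hn2 : ¬ (φ y = 2) := fun hh => hyC (Finset.mem_filter.mpr ⟨Finset.mem_univ _, hh⟩)
      have := (φ y).isLt
      rw [Fin.ext_iff] at hn1 hn2 ⊢
      simp only [Fin.val_one, Fin.val_zero] at *
      omega
    have hk := key x y hne (hx0.trans hy0.symm)
    rw [hx0] at hk
    simp only [Fin.val_zero] at hk
    omega

end LowerBounds

/-! ### Colorings of vertex-deleted cycles -/

section Induce
variable {s : ℕ → ℕ}

def SP.inducedHom {V : Type*} (G : SimpleGraph V) (t : Set V) : G.induce t →g G :=
  ⟨Subtype.val, fun {a b} h => h⟩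

lemma SP.dec_a4 : ∀ a b : Fin 4, a ≠ 0 → b ≠ 0 → a ≠ 2 → b ≠ 2 → a ≠ b →
    (a - b).val ≠ 1 ∧ (b - a).val ≠ 1 := by decide

lemma SP.dec_a8odd : ∀ a b : Fin 8, a.val % 2 = 1 → b.val % 2 = 1 → a ≠ b →
    (a - b).val ≠ 1 ∧ (b - a).val ≠ 1 := by decide

lemma SP.dec_a8even : ∀ a b : Fin 8, a ≠ 0 → b ≠ 0 → a ≠ 4 → b ≠ 4 →
    a.val % 2 = 0 → b.val % 2 = 0 → a ≠ b → b - a = 4 := by decide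

lemma SP.dec_pq8 : ∀ p q : ℕ, p ≤ 3 → q ≤ 3 → (p : Fin 8) - (q : Fin 8) ≠ 4 := by
  intro p q hp hq
  interval_cases p <;> interval_cases q <;> decide

lemma SP.c8_edist_four {u w : Fin 8} (h : w - u = 4) :
    (4 : ℕ∞) ≤ (cycleGraph 8).edist u w := by
  have := SP.cycle_edist_ge (n := 8) (u := u) (v := w) (d := 4) ?_
  · exact_mod_cast this
  · intro p q hpq
    by_contra hc
    push_neg at hc
    exact SP.dec_pq8 p q (by omega) (by omega) (hpq ▸ h)

lemma SP.nonadj_lt {n : ℕ} {t : Set (Fin n)} {u w : ↥t} (hne : u.1 ≠ w.1)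
    (hnadj : ¬ (cycleGraph n).Adj u.1 w.1) :
    (1 : ℕ∞) < ((cycleGraph n).induce t).edist u w :=
  lt_of_lt_of_le (SP.one_lt_edist hne hnadj) (SP.hom_edist_le (SP.inducedHom _ t) u w)

lemma SP.ind4 (h1 : s 0 = 1) (v : Fin 4) :
    SPackingChromatic ((cycleGraph 4).induce {u | u ≠ v}) s ≤ 2 := by
  refine SP.chrom_le (fun x => if x.1 - v = 2 then (1 : Fin 2) else 0) ?_
  intro u w hne heq
  have hne' : u.1 ≠ w.1 := fun h => hne (Subtype.ext h)
  have hd : u.1 - v ≠ w.1 - v := fun h => hne' (by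
    have : u.1 - v + v = w.1 - v + v := by rw [h]
    simpa using this)
  replace heq : (if u.1 - v = 2 then (1 : Fin 2) else 0) =
      (if w.1 - v = 2 then (1 : Fin 2) else 0) := heq
  show (s (if u.1 - v = 2 then (1 : Fin 2) else 0).val : ℕ∞) < _
  by_cases hu : u.1 - v = 2
  · have hw : w.1 - v = 2 := by
      by_contra hw
      rw [if_pos hu, if_neg hw] at heq
      exact absurd heq (by decide)
    exact absurd (hu.trans hw.symm) hd
  · have hw : ¬ (w.1 - v = 2) := by
      intro hw
      rw [if_neg hu, if_pos hw] at heq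
      exact absurd heq (by decide)
    rw [if_neg hu]
    have ha0 : u.1 - v ≠ 0 := sub_ne_zero.mpr u.2
    have hb0 : w.1 - v ≠ 0 := sub_ne_zero.mpr w.2
    obtain ⟨hA, hB⟩ := SP.dec_a4 (u.1 - v) (w.1 - v) ha0 hb0 hu hw hd
    have hnadj : ¬ (cycleGraph 4).Adj u.1 w.1 := by
      rw [cycleGraph_adj']
      have e1 : u.1 - w.1 = (u.1 - v) - (w.1 - v) := by ring
      have e2 : w.1 - u.1 = (w.1 - v) - (u.1 - v) := by ring
      rw [e1, e2]
      push_neg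
      exact ⟨hA, hB⟩
    have hv0 : ((0 : Fin 2)).val = 0 := rfl
    rw [hv0, h1]
    exact_mod_cast SP.nonadj_lt hne' hnadj

lemma SP.ind8 (h1 : s 0 = 1) (h2 : s 1 = 2 ∨ s 1 = 3) (v : Fin 8) :
    SPackingChromatic ((cycleGraph 8).induce {u | u ≠ v}) s ≤ 3 := by
  refine SP.chrom_le (fun x => if x.1 - v = 4 then (2 : Fin 3)
    else if (x.1 - v).val % 2 = 0 then 1 else 0) ?_
  intro u w hne heq
  have hne' : u.1 ≠ w.1 := fun h => hne (Subtype.ext h)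
  have hd : u.1 - v ≠ w.1 - v := fun h => hne' (by
    have : u.1 - v + v = w.1 - v + v := by rw [h]
    simpa using this)
  have ha0 : u.1 - v ≠ 0 := sub_ne_zero.mpr u.2
  have hb0 : w.1 - v ≠ 0 := sub_ne_zero.mpr w.2
  replace heq : (if u.1 - v = 4 then (2 : Fin 3) else if (u.1 - v).val % 2 = 0 then 1 else 0) =
      (if w.1 - v = 4 then (2 : Fin 3) else if (w.1 - v).val % 2 = 0 then 1 else 0) := heq
  show (s (if u.1 - v = 4 then (2 : Fin 3)
      else if (u.1 - v).val % 2 = 0 then 1 else 0).val : ℕ∞) < _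
  by_cases hu4 : u.1 - v = 4
  · have hw4 : w.1 - v = 4 := by
      by_contra hw4
      rw [if_pos hu4, if_neg hw4] at heq
      split_ifs at heq <;> exact absurd heq (by decide)
    exact absurd (hu4.trans hw4.symm) hd
  · have hw4 : ¬ (w.1 - v = 4) := by
      intro hw4
      rw [if_neg hu4, if_pos hw4] at heq
      split_ifs at heq <;> exact absurd heq (by decide)
    rw [if_neg hu4] at heq ⊢
    rw [if_neg hw4] at heq
    by_cases hue : (u.1 - v).val % 2 = 0
    · have hwe : (w.1 - v).val % 2 = 0 := by
        by_contra hwe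
        rw [if_pos hue, if_neg hwe] at heq
        exact absurd heq (by decide)
      rw [if_pos hue]
      have h4 : (w.1 - v) - (u.1 - v) = 4 :=
        SP.dec_a8even (u.1 - v) (w.1 - v) ha0 hb0 hu4 hw4 hue hwe hd
      have hwu : w.1 - u.1 = 4 := by
        have e : w.1 - u.1 = (w.1 - v) - (u.1 - v) := by ring
        rw [e, h4]
      have hedist := SP.c8_edist_four hwu
      have hle : (4 : ℕ∞) ≤ ((cycleGraph 8).induce {u | u ≠ v}).edist u w :=
        le_trans hedist (SP.hom_edist_le (SP.inducedHom _ _) u w)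
      refine lt_of_lt_of_le ?_ hle
      have hv1 : ((1 : Fin 3)).val = 1 := rfl
      rw [hv1]
      rcases h2 with h2 | h2 <;> rw [h2] <;> norm_num
    · have hwe : ¬ ((w.1 - v).val % 2 = 0) := by
        intro hwe
        rw [if_neg hue, if_pos hwe] at heq
        exact absurd heq (by decide)
      rw [if_neg hue]
      obtain ⟨hA, hB⟩ := SP.dec_a8odd (u.1 - v) (w.1 - v) (by omega) (by omega) hd
      have hnadj : ¬ (cycleGraph 8).Adj u.1 w.1 := by
        rw [cycleGraph_adj']
        have e1 : u.1 - w.1 = (u.1 - v) - (w.1 - v) := by ring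
        have e2 : w.1 - u.1 = (w.1 - v) - (u.1 - v) := by ring
        rw [e1, e2]
        push_neg
        exact ⟨hA, hB⟩
      have hv0 : ((0 : Fin 3)).val = 0 := rfl
      rw [hv0, h1]
      exact_mod_cast SP.nonadj_lt hne' hnadj

end Induce

/-! ### Subgraph comparisons -/

section Subgraphs
variable {n : ℕ} {s : ℕ → ℕ}

lemma SP.crit_imp_vc (hn : 3 ≤ n) (h : SCritical (cycleGraph n) s) :
    SVertexCritical (cycleGraph n) s := by
  intro v
  set H : (cycleGraph n).Subgraph := (⊤ : (cycleGraph n).Subgraph).induce {u | u ≠ v} with hH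
  have hne : H ≠ ⊤ := by
    intro he
    have hv : v ∈ H.verts := by rw [he]; trivial
    exact hv rfl
  have hle : SPackingChromatic ((cycleGraph n).induce {u | u ≠ v}) s ≤
      SPackingChromatic H.coe s := by
    refine SP.chrom_mono (G' := H.coe) ⟨fun x => ⟨x.1, x.2⟩, ?_⟩ ?_
    · intro a b hab
      exact ⟨a.2, b.2, hab⟩
    · intro a b hab
      rw [Subtype.ext_iff]
      exact congrArg Subtype.val hab
  exact lt_of_le_of_lt hle (h H hne)

lemma SP.sub_missing_vertex (H : (cycleGraph n).Subgraph) {v : Fin n}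
    (hv : v ∉ H.verts) :
    SPackingChromatic H.coe s ≤
      SPackingChromatic ((cycleGraph n).induce {u | u ≠ v}) s := by
  refine SP.chrom_mono (G' := (cycleGraph n).induce {u | u ≠ v})
    ⟨fun x => ⟨x.1, fun h => hv (h ▸ x.2)⟩, ?_⟩ ?_
  · intro a b hab
    exact H.adj_sub hab
  · intro a b hab
    rw [Subtype.ext_iff]
    exact congrArg (fun z : ↥({u | u ≠ v} : Set (Fin n)) => z.1) hab

lemma SP.sub_missing_edge [NeZero n] (hn : 3 ≤ n)
    (H : (cycleGraph n).Subgraph) {c d : Fin n} (hd : d = c + 1) (hcd : ¬ H.Adj c d) :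
    SPackingChromatic H.coe s ≤ SPackingChromatic (pathGraph n) s := by
  have key : ∀ x y : ↥H.verts, H.Adj x.1 y.1 → (y.1 - x.1).val = 1 →
      (pathGraph n).Adj (x.1 - d) (y.1 - d) := by
    intro x y hxy hval
    have hyx : y.1 = x.1 + 1 := by
      have h1 : y.1 - x.1 = 1 := by
        rw [← Fin.cast_val_eq_self (y.1 - x.1), hval, Nat.cast_one]
      have : x.1 + (y.1 - x.1) = x.1 + 1 := by rw [h1]
      simpa [add_sub_cancel] using this
    have hxc : x.1 ≠ c := by
      intro hxc
      apply hcd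
      rw [hd, ← hxc, ← hyx]
      exact hxy
    have hzne : (x.1 - d).val ≠ n - 1 := by
      intro hz
      apply hxc
      have hz1 : x.1 - d + 1 = 0 := by
        rw [Fin.ext_iff, Fin.val_add, SP.fin_val_one (by omega), hz]
        have : n - 1 + 1 = n := by omega
        rw [this, Nat.mod_self]
        rfl
      have e : x.1 = (x.1 - d + 1) + c := by rw [hd]; ring
      rw [hz1] at e
      simpa using e
    have hv1 : (y.1 - d).val = (x.1 - d).val + 1 := by
      have e : y.1 - d = (x.1 - d) + 1 := by rw [hyx]; ring
      have hlt : (x.1 - d).val + 1 < n := by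
        have := (x.1 - d).isLt
        omega
      rw [e, Fin.val_add, SP.fin_val_one (by omega), Nat.mod_eq_of_lt hlt]
    rw [pathGraph_adj]
    left
    exact hv1.symm
  refine SP.chrom_mono (G' := pathGraph n) ⟨fun x => x.1 - d, ?_⟩ ?_
  · intro a b hab
    rcases cycleGraph_adj'.mp (H.adj_sub hab) with h | h
    · exact (key b a hab.symm h).symm
    · exact key a b hab h
  · intro a b hab
    have hab' : a.1 - d = b.1 - d := hab
    have : a.1 = b.1 := by
      have e := congrArg (fun z => z + d) hab'
      simpa using e
    exact Subtype.ext this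

lemma SP.pathn1_le_induce [NeZero n] (hn : 3 ≤ n) (v : Fin n) :
    SPackingChromatic (pathGraph (n-1)) s ≤
      SPackingChromatic ((cycleGraph n).induce {u | u ≠ v}) s := by
  have hval : ∀ i : Fin (n-1), ((1 + i.val : ℕ) : Fin n).val = 1 + i.val := by
    intro i
    have := i.isLt
    exact Fin.val_cast_of_lt (by omega)
  refine SP.chrom_mono (G' := (cycleGraph n).induce {u | u ≠ v})
    ⟨fun i => ⟨v + ((1 + i.val : ℕ) : Fin n), ?_⟩, ?_⟩ ?_
  · intro h
    have h0 : ((1 + i.val : ℕ) : Fin n) = 0 := by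
      have e := congrArg (fun z => z - v) h
      simpa using e
    have := congrArg Fin.val h0
    rw [hval i] at this
    simp at this
  · intro i j hij
    have hadj : ∀ i j : Fin (n-1), j.val = i.val + 1 →
        ((cycleGraph n).induce {u | u ≠ v}).Adj
          ⟨v + ((1 + i.val : ℕ) : Fin n), by
            intro h
            have h0 : ((1 + i.val : ℕ) : Fin n) = 0 := by
              have e := congrArg (fun z => z - v) h
              simpa using e
            have := congrArg Fin.val h0
            rw [hval i] at this
            simp at this⟩
          ⟨v + ((1 + j.val : ℕ) : Fin n), by
            intro h
            have h0 : ((1 + j.val : ℕ) : Fin n) = 0 := by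
              have e := congrArg (fun z => z - v) h
              simpa using e
            have := congrArg Fin.val h0
            rw [hval j] at this
            simp at this⟩ := by
      intro i j hji
      show (cycleGraph n).Adj (v + ((1 + i.val : ℕ) : Fin n)) (v + ((1 + j.val : ℕ) : Fin n))
      rw [cycleGraph_adj']
      right
      have e : (v + ((1 + j.val : ℕ) : Fin n)) - (v + ((1 + i.val : ℕ) : Fin n)) = 1 := by
        rw [hji]
        push_cast
        ring
      rw [e, SP.fin_val_one (by omega)]
    rcases pathGraph_adj.mp hij with h | h
    · exact hadj i j h.symm
    · exact (hadj j i h.symm).symm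
  · intro i j hij
    have hij' : v + ((1 + i.val : ℕ) : Fin n) = v + ((1 + j.val : ℕ) : Fin n) :=
      congrArg Subtype.val hij
    have := congrArg (fun z => (z - v : Fin n)) hij'
    simp only [add_sub_cancel_left] at this
    have hv := congrArg Fin.val this
    rw [hval i, hval j] at hv
    exact Fin.ext (by omega)

lemma SP.path_step (h1 : s 0 = 1) (h2 : s 1 = 2 ∨ s 1 = 3) (h3 : 4 ≤ s 2 ∧ s 2 ≤ 7)
    (h4 : 4 ≤ s 3 ∧ s 3 ≤ 7) (hpos : ∀ i, 1 ≤ s i)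
    (hn : 3 ≤ n) (e4 : n ≠ 4) (e8 : n ≠ 8) :
    SPackingChromatic (pathGraph n) s ≤ SPackingChromatic (pathGraph (n-1)) s := by
  rcases (by omega : n = 3 ∨ (5 ≤ n ∧ n ≤ 7) ∨ 9 ≤ n) with h | ⟨h5, h7⟩ | h9
  · subst h
    calc SPackingChromatic (pathGraph 3) s ≤ 2 := SP.path_le_two h1 (by norm_num)
      _ ≤ SPackingChromatic (pathGraph 2) s := SP.lb_P2 hpos
  · calc SPackingChromatic (pathGraph n) s ≤ 3 := SP.path_le_three h1 h2 (by omega)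
      _ ≤ SPackingChromatic (pathGraph 4) s := SP.lb_P4 h1 h2
      _ ≤ SPackingChromatic (pathGraph (n-1)) s := SP.path_mono (by omega)
  · calc SPackingChromatic (pathGraph n) s ≤ 4 := SP.path_le_four h1 h2 h3 h4
      _ ≤ SPackingChromatic (pathGraph 8) s := SP.lb_P8 h1 h2 h3
      _ ≤ SPackingChromatic (pathGraph (n-1)) s := SP.path_mono (by omega)

end Subgraphs

theorem stmt19 (s : ℕ → ℕ) (hmono : Monotone s) (hpos : ∀ i, 1 ≤ s i)
    (h1 : s 0 = 1) (h2 : s 1 = 2 ∨ s 1 = 3)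
    (h3 : 4 ≤ s 2 ∧ s 2 ≤ 7) (h4 : 4 ≤ s 3 ∧ s 3 ≤ 7)
    (n : ℕ) (hn : 3 ≤ n) :
    SVertexCritical (cycleGraph n) s ↔
      (n = 4 ∨ n = 8 ∨ SCritical (cycleGraph n) s) := by
  haveI : NeZero n := ⟨by omega⟩
  constructor
  · intro hvc
    by_cases e4 : n = 4
    · exact Or.inl e4
    by_cases e8 : n = 8
    · exact Or.inr (Or.inl e8)
    refine Or.inr (Or.inr ?_)
    intro H hne
    by_cases hverts : H.verts = Set.univ
    · have hADJ : ∃ a b, (cycleGraph n).Adj a b ∧ ¬ H.Adj a b := by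
        by_contra hc
        push_neg at hc
        apply hne
        refine SimpleGraph.Subgraph.ext hverts ?_
        funext a b
        exact propext ⟨fun h => h.adj_sub, fun h => hc a b h⟩
      obtain ⟨a, b, hab, hnab⟩ := hADJ
      have hch : SPackingChromatic H.coe s ≤ SPackingChromatic (pathGraph n) s := by
        rcases cycleGraph_adj'.mp hab with h | h
        · have had : a = b + 1 := by
            have h1' : a - b = 1 := by
              rw [← Fin.cast_val_eq_self (a - b), h, Nat.cast_one]
            have : b + (a - b) = b + 1 := by rw [h1']
            simpa [add_sub_cancel] using this
          exact SP.sub_missing_edge hn H had (fun hh => hnab hh.symm)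
        · have hbd : b = a + 1 := by
            have h1' : b - a = 1 := by
              rw [← Fin.cast_val_eq_self (b - a), h, Nat.cast_one]
            have : a + (b - a) = a + 1 := by rw [h1']
            simpa [add_sub_cancel] using this
          exact SP.sub_missing_edge hn H hbd hnab
      calc SPackingChromatic H.coe s ≤ SPackingChromatic (pathGraph n) s := hch
        _ ≤ SPackingChromatic (pathGraph (n-1)) s :=
            SP.path_step h1 h2 h3 h4 hpos hn e4 e8
        _ ≤ SPackingChromatic ((cycleGraph n).induce {u | u ≠ (0 : Fin n)}) s :=
            SP.pathn1_le_induce hn 0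
        _ < SPackingChromatic (cycleGraph n) s := hvc 0
    · obtain ⟨v, hv⟩ : ∃ v, v ∉ H.verts := by
        by_contra hc
        push_neg at hc
        exact hverts (Set.eq_univ_of_forall hc)
      exact lt_of_le_of_lt (SP.sub_missing_vertex H hv) (hvc v)
  · intro h
    rcases h with e4 | e8 | hcrit
    · subst e4
      intro v
      exact lt_of_le_of_lt (SP.ind4 h1 v) (SP.lb_C4 h1 h2)
    · subst e8
      intro v
      exact lt_of_le_of_lt (SP.ind8 h1 h2 v) (SP.lb_C8 h1 h2 h3)
    · exact SP.crit_imp_vc hn hcrit
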